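/- Let 1 ≤ d ≤ m and 1 ≤ r ≤ m+1−d, and consider the set S_d(r) ⊆ S_d(m) of r exponent vectors given by α^{(i)} = e_1 + ⋯ + e_{d−1} + e_{d+i−1} for 1 ≤ i ≤ r (corresponding to the monomials x_1⋯x_{d−1}x_{d+i−1}), where e_j denotes the j-th standard basis vector of {0,1}^m. Then |∇_X(S_d(r))| = ∏_{j=1}^{d−1}(n_j − 1) · ∏_{j=d+r}^{m} n_j · (∏_{j=d}^{d+r−1} n_j − 1). -/

import Mathlib

/-- Square-free exponent vectors of total degree `d` in `m` variables. -/
def Sd (m d : ℕ) : Set (Fin m → ℕ) := {a | (∀ i, a i ≤ 1) ∧ ∑ i, a i = d}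

/-- Square-free exponent vectors of total degree at most `d` in `m` variables. -/
def Sle (m d : ℕ) : Set (Fin m → ℕ) := {a | (∀ i, a i ≤ 1) ∧ ∑ i, a i ≤ d}

/-- Evaluation code over the Cartesian set `X = A 0 × ⋯ × A (m-1)`, spanned by the
evaluations of the monomials `x^a` for `a ∈ S`. -/
noncomputable def evalCodeX {F : Type*} [Field F] {m : ℕ} (A : Fin m → Finset F)
    (S : Set (Fin m → ℕ)) :
    Submodule F ({P : Fin m → F // ∀ i, P i ∈ A i} → F) :=
  Submodule.span F ((fun (a : Fin m → ℕ) (P : {P : Fin m → F // ∀ i, P i ∈ A i}) =>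
    ∏ i, P.1 i ^ a i) '' S)

open Classical in
/-- Support of a linear code. -/
noncomputable def codeSupp {F ι : Type*} [Field F] [Fintype ι]
    (C : Submodule F (ι → F)) : Finset ι :=
  Finset.univ.filter (fun i => ∃ c ∈ C, c i ≠ 0)

/-- The `r`-th generalized Hamming weight of a linear code: the minimum cardinality of the
support of an `r`-dimensional subcode. -/
noncomputable def GHW {F ι : Type*} [Field F] [Fintype ι]
    (C : Submodule F (ι → F)) (r : ℕ) : ℕ :=
  sInf {k | ∃ C' : Submodule F (ι → F),
    C' ≤ C ∧ Module.finrank F C' = r ∧ (codeSupp C').card = k}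

/-- The footprint box `B_X = {0,…,n_1−1} × ⋯ × {0,…,n_m−1}`. -/
noncomputable def BX {F : Type*} {m : ℕ} (A : Fin m → Finset F) : Finset (Fin m → ℕ) :=
  Fintype.piFinset (fun i => Finset.range (A i).card)

open Classical in
/-- The shadow `∇_X(N)`: elements of `B_X` divisible by some element of `N`. -/
noncomputable def nablaX {F : Type*} {m : ℕ} (A : Fin m → Finset F)
    (N : Set (Fin m → ℕ)) : Finset (Fin m → ℕ) :=
  (BX A).filter (fun b => ∃ a ∈ N, ∀ i, a i ≤ b i)

open Classical in
/-- The footprint `Δ_X(N) = B_X ∖ ∇_X(N)`. -/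
noncomputable def deltaX {F : Type*} {m : ℕ} (A : Fin m → Finset F)
    (N : Set (Fin m → ℕ)) : Finset (Fin m → ℕ) :=
  (BX A).filter (fun b => ¬ ∃ a ∈ N, ∀ i, a i ≤ b i)

/-- `nval A k` is the cardinality `n_k = |A_k|`, with the paper's 1-based indexing
(junk value `1` outside the range `1 ≤ k ≤ m`). -/
def nval {F : Type*} {m : ℕ} (A : Fin m → Finset F) (k : ℕ) : ℕ :=
  if h : 1 ≤ k ∧ k ≤ m then (A ⟨k - 1, by omega⟩).card else 1

lemma prod_Icc_eq_prod_fin {m : ℕ} (hm : 1 ≤ m) (g : Fin m → ℕ) (f : ℕ → ℕ)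
    (a b : ℕ) (ha : 1 ≤ a) (hbm : b ≤ m)
    (hfg : ∀ k, ∀ _ : a ≤ k, ∀ _ : k ≤ b, f k = g ⟨k - 1, by omega⟩) :
    ∏ k ∈ Finset.Icc a b, f k
      = ∏ j ∈ Finset.univ.filter (fun j : Fin m => a ≤ (j : ℕ) + 1 ∧ (j : ℕ) + 1 ≤ b), g j := by
  refine Finset.prod_nbij' (fun k => if h : 1 ≤ k ∧ k ≤ m then (⟨k - 1, by omega⟩ : Fin m)
      else ⟨0, by omega⟩) (fun j => (j : ℕ) + 1) ?_ ?_ ?_ ?_ ?_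
  · intro k hk
    rw [Finset.mem_Icc] at hk
    have h1 : 1 ≤ k ∧ k ≤ m := ⟨le_trans ha hk.1, le_trans hk.2 hbm⟩
    simp only [dif_pos h1, Finset.mem_filter, Finset.mem_univ, true_and]
    constructor <;> omega
  · intro j hj
    rw [Finset.mem_filter] at hj
    rw [Finset.mem_Icc]
    omega
  · intro k hk
    rw [Finset.mem_Icc] at hk
    have h1 : 1 ≤ k ∧ k ≤ m := ⟨le_trans ha hk.1, le_trans hk.2 hbm⟩
    simp only [dif_pos h1]
    omega
  · intro j hj
    rw [Finset.mem_filter] at hj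
    have h1 : 1 ≤ (j : ℕ) + 1 ∧ (j : ℕ) + 1 ≤ m := ⟨by omega, j.2⟩
    simp only [dif_pos h1]
    exact Fin.ext (by simp)
  · intro k hk
    rw [Finset.mem_Icc] at hk
    have h1 : 1 ≤ k ∧ k ≤ m := ⟨le_trans ha hk.1, le_trans hk.2 hbm⟩
    simp only [dif_pos h1]
    exact hfg k hk.1 hk.2

/-- Let `1 ≤ d ≤ m` and `1 ≤ r ≤ m+1−d`, and consider the set
`S_d(r) = {x_1⋯x_{d−1}x_{d+i−1} : 1 ≤ i ≤ r}` of exponent vectors (in 0-based indexing,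
the `i`-th vector has ones exactly at positions `0,…,d−2` and `d−1+i`). Then
`|∇_X(S_d(r))| = ∏_{j=1}^{d−1}(n_j−1) · ∏_{j=d+r}^{m} n_j · (∏_{j=d}^{d+r−1} n_j − 1)`. -/
theorem shadow_card_of_Sdr
    {F : Type*} [Field F] [Fintype F] [DecidableEq F] {m d r : ℕ}
    (A : Fin m → Finset F)
    (hcard : ∀ i, 2 ≤ (A i).card)
    (hmono : ∀ i j : Fin m, i ≤ j → (A i).card ≤ (A j).card)
    (hd1 : 1 ≤ d) (hdm : d ≤ m) (hr1 : 1 ≤ r) (hr2 : r ≤ m + 1 - d) :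
    (nablaX A (Set.range (fun i : Fin r => fun t : Fin m =>
        if (t : ℕ) < d - 1 ∨ (t : ℕ) = d - 1 + (i : ℕ) then 1 else 0))).card =
      (∏ j ∈ Finset.Icc 1 (d - 1), (nval A j - 1)) *
        (∏ j ∈ Finset.Icc (d + r) m, nval A j) *
        ((∏ j ∈ Finset.Icc d (d + r - 1), nval A j) - 1) := by
  classical
  have hm : 1 ≤ m := le_trans hd1 hdm
  have hdr : d + r - 1 ≤ m := by omega
  set T1c : Fin m → Finset ℕ := fun j =>
    if (j : ℕ) < d - 1 then Finset.Icc 1 ((A j).card - 1) else Finset.range (A j).card with hT1c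
  set T2c : Fin m → Finset ℕ := fun j =>
    if (j : ℕ) < d - 1 then Finset.Icc 1 ((A j).card - 1)
    else if (j : ℕ) < d - 1 + r then ({0} : Finset ℕ) else Finset.range (A j).card with hT2c
  have hsub : Fintype.piFinset T2c ⊆ Fintype.piFinset T1c := by
    apply Fintype.piFinset_subset
    intro j
    rw [hT1c, hT2c]
    dsimp only
    by_cases h1 : (j : ℕ) < d - 1
    · rw [if_pos h1, if_pos h1]
    · rw [if_neg h1, if_neg h1]
      by_cases h2 : (j : ℕ) < d - 1 + r
      · rw [if_pos h2]
        intro x hx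
        simp only [Finset.mem_singleton] at hx
        subst hx
        simp only [Finset.mem_range]
        have := hcard j
        omega
      · rw [if_neg h2]
  have key : nablaX A (Set.range (fun i : Fin r => fun t : Fin m =>
        if (t : ℕ) < d - 1 ∨ (t : ℕ) = d - 1 + (i : ℕ) then 1 else 0))
      = Fintype.piFinset T1c \ Fintype.piFinset T2c := by
    ext b
    simp only [nablaX, BX, Finset.mem_filter, Fintype.mem_piFinset, Finset.mem_range,
      Finset.mem_sdiff, Set.mem_range, exists_exists_eq_and]
    constructor
    · rintro ⟨hb, i, hi⟩
      refine ⟨?_, ?_⟩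
      · intro j
        rw [hT1c]
        dsimp only
        by_cases h1 : (j : ℕ) < d - 1
        · rw [if_pos h1]
          have h2 := hi j
          rw [if_pos (Or.inl h1)] at h2
          rw [Finset.mem_Icc]
          have h3 := hb j
          omega
        · rw [if_neg h1]
          rw [Finset.mem_range]
          exact hb j
      · intro h2
        have hlt : d - 1 + (i : ℕ) < m := by have := i.2; omega
        have h3 := h2 ⟨d - 1 + (i : ℕ), hlt⟩
        rw [hT2c] at h3
        dsimp only at h3
        rw [if_neg (by omega), if_pos (by omega)] at h3
        simp only [Finset.mem_singleton] at h3
        have h4 := hi ⟨d - 1 + (i : ℕ), hlt⟩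
        rw [if_pos (Or.inr rfl)] at h4
        omega
    · rintro ⟨h1, h2⟩
      have hb : ∀ j, b j < (A j).card := by
        intro j
        have h3 := h1 j
        rw [hT1c] at h3
        dsimp only at h3
        by_cases hj : (j : ℕ) < d - 1
        · rw [if_pos hj, Finset.mem_Icc] at h3
          have := hcard j
          omega
        · rw [if_neg hj, Finset.mem_range] at h3
          exact h3
      refine ⟨hb, ?_⟩
      push_neg at h2
      obtain ⟨j, hj⟩ := h2
      rw [hT2c] at hj
      dsimp only at hj
      have hjd : ¬ ((j : ℕ) < d - 1) := by
        intro hlt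
        rw [if_pos hlt] at hj
        have h3 := h1 j
        rw [hT1c] at h3
        dsimp only at h3
        rw [if_pos hlt] at h3
        exact hj h3
      rw [if_neg hjd] at hj
      have hjr : (j : ℕ) < d - 1 + r := by
        by_contra hge
        rw [if_neg hge] at hj
        have h3 := h1 j
        rw [hT1c] at h3
        dsimp only at h3
        rw [if_neg hjd] at h3
        exact hj h3
      rw [if_pos hjr] at hj
      simp only [Finset.mem_singleton] at hj
      refine ⟨⟨(j : ℕ) - (d - 1), by omega⟩, ?_⟩
      intro t
      dsimp only
      by_cases ht : (t : ℕ) < d - 1 ∨ (t : ℕ) = d - 1 + ((j : ℕ) - (d - 1))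
      · rw [if_pos ht]
        rcases ht with ht | ht
        · have h3 := h1 t
          rw [hT1c] at h3
          dsimp only at h3
          rw [if_pos ht, Finset.mem_Icc] at h3
          exact h3.1
        · have htj : t = j := Fin.ext (by omega)
          subst htj
          omega
      · rw [if_neg ht]
        exact Nat.zero_le _
  rw [key, Finset.card_sdiff_of_subset hsub, Fintype.card_piFinset, Fintype.card_piFinset]
  have hc1 : ∀ j : Fin m, (T1c j).card
      = if (j : ℕ) < d - 1 then (A j).card - 1 else (A j).card := by
    intro j
    rw [hT1c]
    dsimp only
    by_cases h1 : (j : ℕ) < d - 1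
    · rw [if_pos h1, if_pos h1, Nat.card_Icc]
      omega
    · rw [if_neg h1, if_neg h1, Finset.card_range]
  have hc2 : ∀ j : Fin m, (T2c j).card =
      if (j : ℕ) < d - 1 then (A j).card - 1
      else if (j : ℕ) < d - 1 + r then 1 else (A j).card := by
    intro j
    rw [hT2c]
    dsimp only
    by_cases h1 : (j : ℕ) < d - 1
    · rw [if_pos h1, if_pos h1, Nat.card_Icc]; omega
    · rw [if_neg h1, if_neg h1]
      by_cases h2 : (j : ℕ) < d - 1 + r
      · rw [if_pos h2, if_pos h2, Finset.card_singleton]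
      · rw [if_neg h2, if_neg h2, Finset.card_range]
  simp only [hc1, hc2]
  set s1 := Finset.univ.filter (fun j : Fin m => (j : ℕ) < d - 1) with hs1
  set s2 := Finset.univ.filter
    (fun j : Fin m => ¬ ((j : ℕ) < d - 1) ∧ (j : ℕ) < d - 1 + r) with hs2
  set s3 := Finset.univ.filter
    (fun j : Fin m => ¬ ((j : ℕ) < d - 1) ∧ ¬ ((j : ℕ) < d - 1 + r)) with hs3
  have split1 : ∀ f : Fin m → ℕ,
      (∏ j : Fin m, (if (j : ℕ) < d - 1 then (A j).card - 1 else f j))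
      = (∏ j ∈ s1, ((A j).card - 1)) * ((∏ j ∈ s2, f j) * (∏ j ∈ s3, f j)) := by
    intro f
    rw [← Finset.prod_filter_mul_prod_filter_not Finset.univ (fun j : Fin m => (j : ℕ) < d - 1)]
    congr 1
    · exact Finset.prod_congr rfl (fun j hj => by
        rw [Finset.mem_filter] at hj; rw [if_pos hj.2])
    · rw [← Finset.prod_filter_mul_prod_filter_not
        (Finset.univ.filter (fun j : Fin m => ¬ ((j : ℕ) < d - 1)))
        (fun j : Fin m => (j : ℕ) < d - 1 + r)]
      rw [Finset.filter_filter, Finset.filter_filter]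
      congr 1
      · exact Finset.prod_congr rfl (fun j hj => by
          rw [Finset.mem_filter] at hj
          rw [if_neg hj.2.1])
      · exact Finset.prod_congr rfl (fun j hj => by
          rw [Finset.mem_filter] at hj
          rw [if_neg hj.2.1])
  rw [split1, split1]
  have e2 : ∏ j ∈ s2, (if (j : ℕ) < d - 1 + r then 1 else (A j).card) = 1 := by
    apply Finset.prod_eq_one
    intro j hj
    rw [hs2, Finset.mem_filter] at hj
    rw [if_pos hj.2.2]
  have e2' : ∏ j ∈ s3, (if (j : ℕ) < d - 1 + r then 1 else (A j).card)
      = ∏ j ∈ s3, (A j).card := by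
    apply Finset.prod_congr rfl
    intro j hj
    rw [hs3, Finset.mem_filter] at hj
    rw [if_neg hj.2.2]
  rw [e2, e2', one_mul]
  have r1 : ∏ j ∈ Finset.Icc 1 (d - 1), (nval A j - 1) = ∏ j ∈ s1, ((A j).card - 1) := by
    rw [prod_Icc_eq_prod_fin hm (fun j => (A j).card - 1) (fun k => nval A k - 1) 1 (d - 1)
      le_rfl (by omega) (fun k hk1 hk2 => by
        simp only [nval]; rw [dif_pos ⟨hk1, by omega⟩])]
    apply Finset.prod_congr
    · rw [hs1]; apply Finset.filter_congr; intro j _; simp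
    · intros; rfl
  have r2 : ∏ j ∈ Finset.Icc d (d + r - 1), nval A j = ∏ j ∈ s2, (A j).card := by
    rw [prod_Icc_eq_prod_fin hm (fun j => (A j).card) (nval A) d (d + r - 1) hd1 hdr
      (fun k hk1 hk2 => by simp only [nval]; rw [dif_pos ⟨by omega, by omega⟩])]
    apply Finset.prod_congr
    · rw [hs2]; apply Finset.filter_congr; intro j _; simp; omega
    · intros; rfl
  have r3 : ∏ j ∈ Finset.Icc (d + r) m, nval A j = ∏ j ∈ s3, (A j).card := by
    rw [prod_Icc_eq_prod_fin hm (fun j => (A j).card) (nval A) (d + r) m (by omega) le_rfl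
      (fun k hk1 hk2 => by simp only [nval]; rw [dif_pos ⟨by omega, by omega⟩])]
    apply Finset.prod_congr
    · rw [hs3]; apply Finset.filter_congr; intro j _; simp; omega
    · intros; rfl
  rw [r1, r2, r3]
  have harith : ∀ a b c : ℕ, a * (b * c) - a * c = a * c * (b - 1) := by
    intro a b c
    rw [Nat.mul_sub, mul_one]
    congr 1
    ring
  exact harith _ _ _
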